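/- Let C be a d-circuit and W a sound nonnegative edge-weighting of C. Then there exists a tuple-weighting ω : R(C) → ℝ₊ such that for every edge e of C, W(e) = Σ_{τ ∈ R(e)} ω(τ), i.e., W is the edge-weighting induced by ω. -/
import Mathlib


open Finset

/-- Labels of gates in a `{∪,×}`-circuit: inputs `x/d`, union gates, product gates. -/
inductive GLabel (X D : Type) where
  | inp (x : X) (d : D)
  | union
  | prod

/-- Restriction of a (partial) tuple to a set of attributes. -/
def restrictTup {X D : Type} [DecidableEq X] (τ : X → Option D) (A : Finset X) :
    X → Option D :=
  fun x => if x ∈ A then τ x else none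

/-- A `{∪,×}`-circuit on attributes `X` and domain `D`: a finite DAG whose leaves are
labeled by singleton relations `x/d`, internal gates by `∪` or `×` (with the syntactic
restrictions on attribute sets), together with its semantics `rel`. -/
structure Circuit (X D : Type) [Fintype X] [Fintype D] [DecidableEq X] [DecidableEq D] where
  Gate : Type
  fg : Fintype Gate
  dg : DecidableEq Gate
  children : Gate → Finset Gate
  label : Gate → GLabel X D
  output : Gate
  attrs : Gate → Finset X
  rel : Gate → Finset (X → Option D)
  depth : Gate → ℕ
  depth_lt : ∀ u, ∀ c ∈ children u, depth c < depth u
  inp_no_children : ∀ u x d, label u = .inp x d → children u = ∅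
  internal_children_nonempty :
    ∀ u, (label u = .union ∨ label u = .prod) → (children u).Nonempty
  attrs_inp : ∀ u x d, label u = .inp x d → attrs u = {x}
  attrs_internal :
    ∀ u, (label u = .union ∨ label u = .prod) → attrs u = (children u).biUnion attrs
  union_attrs : ∀ u, label u = .union → ∀ c ∈ children u, attrs c = attrs u
  prod_attrs : ∀ u, label u = .prod →
    ∀ c₁ ∈ children u, ∀ c₂ ∈ children u, c₁ ≠ c₂ → Disjoint (attrs c₁) (attrs c₂)
  rel_support : ∀ u, ∀ τ ∈ rel u, ∀ x, (τ x).isSome ↔ x ∈ attrs u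
  rel_inp : ∀ u x d, label u = .inp x d →
    ∀ τ, τ ∈ rel u ↔ τ = (fun y => if y = x then some d else none)
  rel_union : ∀ u, label u = .union → ∀ τ, τ ∈ rel u ↔ ∃ c ∈ children u, τ ∈ rel c
  rel_prod : ∀ u, label u = .prod →
    ∀ τ, τ ∈ rel u ↔ ((∀ x, (τ x).isSome ↔ x ∈ attrs u) ∧
      ∀ c ∈ children u, restrictTup τ (attrs c) ∈ rel c)

attribute [instance] Circuit.fg Circuit.dg

namespace Circuit

variable {X D : Type} [Fintype X] [Fintype D] [DecidableEq X] [DecidableEq D]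

/-- A d-circuit: every `∪`-gate is disjoint (its children define pairwise
disjoint relations). -/
def DisjointUnions (C : Circuit X D) : Prop :=
  ∀ u, C.label u = .union → ∀ c₁ ∈ C.children u, ∀ c₂ ∈ C.children u,
    c₁ ≠ c₂ → Disjoint (C.rel c₁) (C.rel c₂)

/-- The gates of the proof-tree of a tuple `τ`: the output gate is in, and a child `u`
of an included gate `v` is included iff the restriction of `τ` to the attributes of
the subcircuit rooted at `u` belongs to the relation of `u`. -/
inductive InPT (C : Circuit X D) (τ : X → Option D) : C.Gate → Prop
  | out : InPT C τ C.output
  | step {u v : C.Gate} : InPT C τ v → u ∈ C.children v →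
      restrictTup τ (C.attrs u) ∈ C.rel u → InPT C τ u

/-- An edge `e = (u, v)` (from child `u` to parent `v`) belongs to the proof-tree
of `τ`. -/
def EdgeInPT (C : Circuit X D) (τ : X → Option D) (e : C.Gate × C.Gate) : Prop :=
  C.InPT τ e.2 ∧ e.1 ∈ C.children e.2 ∧ restrictTup τ (C.attrs e.1) ∈ C.rel e.1

/-- The edges of the circuit, directed from child to parent. -/
def edges (C : Circuit X D) : Finset (C.Gate × C.Gate) :=
  Finset.univ.filter (fun e => e.1 ∈ C.children e.2)

/-- Outgoing edges of a gate `u` (towards its parents). -/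
def outEdges (C : Circuit X D) (u : C.Gate) : Finset (C.Gate × C.Gate) :=
  C.edges.filter (fun e => e.1 = u)

/-- Ingoing edges of a gate `u` (from its children). -/
def inEdges (C : Circuit X D) (u : C.Gate) : Finset (C.Gate × C.Gate) :=
  C.edges.filter (fun e => e.2 = u)

open Classical in
/-- `R(e)`: the set of tuples of `R(C)` whose proof-tree contains the edge `e`. -/
noncomputable def relEdge (C : Circuit X D) (e : C.Gate × C.Gate) :
    Finset (X → Option D) :=
  (C.rel C.output).filter (fun τ => C.EdgeInPT τ e)

/-- Soundness of an edge-weighting: flow conservation at non-output `∪`-gates, and at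
`×`-gates all ingoing edges carry the same weight, which (for non-output gates)
equals the sum of the outgoing weights. -/
def Sound (C : Circuit X D) (W : C.Gate × C.Gate → ℝ) : Prop :=
  (∀ u, C.label u = .union → u ≠ C.output →
      ∑ i ∈ C.inEdges u, W i = ∑ o ∈ C.outEdges u, W o) ∧
  (∀ u, C.label u = .prod →
      (∀ i ∈ C.inEdges u, ∀ i' ∈ C.inEdges u, W i = W i') ∧
      (u ≠ C.output → ∀ i ∈ C.inEdges u, W i = ∑ o ∈ C.outEdges u, W o))

end Circuit

namespace Circuit

variable {X D : Type} [Fintype X] [Fintype D] [DecidableEq X] [DecidableEq D]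

lemma mem_edges' (C : Circuit X D) {e : C.Gate × C.Gate} :
    e ∈ C.edges ↔ e.1 ∈ C.children e.2 := by
  simp [edges]

lemma mem_inEdges' (C : Circuit X D) {u : C.Gate} {e : C.Gate × C.Gate} :
    e ∈ C.inEdges u ↔ e.1 ∈ C.children e.2 ∧ e.2 = u := by
  simp [inEdges, edges, Finset.mem_filter]

lemma mem_outEdges' (C : Circuit X D) {u : C.Gate} {e : C.Gate × C.Gate} :
    e ∈ C.outEdges u ↔ e.1 ∈ C.children e.2 ∧ e.1 = u := by
  simp [outEdges, edges, Finset.mem_filter]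

lemma attrs_child_subset (C : Circuit X D) {u c : C.Gate} (hc : c ∈ C.children u) :
    C.attrs c ⊆ C.attrs u := by
  cases hl : C.label u with
  | inp x d => rw [C.inp_no_children u x d hl] at hc; simp at hc
  | union => rw [C.attrs_internal u (Or.inl hl)]; exact Finset.subset_biUnion_of_mem _ hc
  | prod => rw [C.attrs_internal u (Or.inr hl)]; exact Finset.subset_biUnion_of_mem _ hc

lemma attrs_nonempty (C : Circuit X D) : ∀ u : C.Gate, (C.attrs u).Nonempty := by
  have key : ∀ n (u : C.Gate), C.depth u = n → (C.attrs u).Nonempty := by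
    intro n
    induction n using Nat.strong_induction_on with
    | _ n ih =>
      intro u hu
      cases hl : C.label u with
      | inp x d => rw [C.attrs_inp u x d hl]; exact ⟨x, by simp⟩
      | union =>
        obtain ⟨c, hc⟩ := C.internal_children_nonempty u (Or.inl hl)
        obtain ⟨x, hx⟩ := ih (C.depth c) (hu ▸ C.depth_lt u c hc) c rfl
        exact ⟨x, (C.attrs_child_subset hc) hx⟩
      | prod =>
        obtain ⟨c, hc⟩ := C.internal_children_nonempty u (Or.inr hl)
        obtain ⟨x, hx⟩ := ih (C.depth c) (hu ▸ C.depth_lt u c hc) c rfl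
        exact ⟨x, (C.attrs_child_subset hc) hx⟩
  exact fun u => key (C.depth u) u rfl

end Circuit

lemma restrictTup_restrictTup {X D : Type} [DecidableEq X] {A B : Finset X} (h : B ⊆ A)
    (τ : X → Option D) : restrictTup (restrictTup τ A) B = restrictTup τ B := by
  funext x
  simp only [restrictTup]
  by_cases hx : x ∈ B
  · simp [hx, h hx]
  · simp [hx]

namespace Circuit

variable {X D : Type} [Fintype X] [Fintype D] [DecidableEq X] [DecidableEq D]

lemma restrict_of_rel (C : Circuit X D) {u : C.Gate} {τ : X → Option D}
    (h : τ ∈ C.rel u) : restrictTup τ (C.attrs u) = τ := by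
  funext x
  simp only [restrictTup]
  by_cases hx : x ∈ C.attrs u
  · simp [hx]
  · have hs := C.rel_support u τ h x
    simp only [hx, if_false]
    symm
    rw [← Option.not_isSome_iff_eq_none]
    simp [hs, hx]

/-- Proof-tree membership relative to an arbitrary root gate `r`. -/
inductive InPTF (C : Circuit X D) (r : C.Gate) (τ : X → Option D) : C.Gate → Prop
  | base : InPTF C r τ r
  | step {u v : C.Gate} : InPTF C r τ v → u ∈ C.children v →
      restrictTup τ (C.attrs u) ∈ C.rel u → InPTF C r τ u

def EdgePTF (C : Circuit X D) (r : C.Gate) (τ : X → Option D) (e : C.Gate × C.Gate) : Prop :=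
  InPTF C r τ e.2 ∧ e.1 ∈ C.children e.2 ∧ restrictTup τ (C.attrs e.1) ∈ C.rel e.1

lemma inPT_iff (C : Circuit X D) (τ : X → Option D) (u : C.Gate) :
    C.InPT τ u ↔ InPTF C C.output τ u := by
  constructor
  · intro h
    induction h with
    | out => exact .base
    | step h hu hr ih => exact .step ih hu hr
  · intro h
    induction h with
    | base => exact .out
    | step h hu hr ih => exact .step ih hu hr

lemma edgeInPT_iff (C : Circuit X D) {τ : X → Option D} {e : C.Gate × C.Gate} :
    C.EdgeInPT τ e ↔ EdgePTF C C.output τ e := by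
  unfold EdgeInPT EdgePTF
  rw [inPT_iff]

lemma inPTF_attrs_subset (C : Circuit X D) {r u : C.Gate} {τ : X → Option D}
    (h : InPTF C r τ u) : C.attrs u ⊆ C.attrs r := by
  induction h with
  | base => exact Finset.Subset.refl _
  | @step a b hb hc hr ih => exact (C.attrs_child_subset hc).trans ih

lemma inPTF_rel (C : Circuit X D) {r u : C.Gate} {τ : X → Option D} (hτ : τ ∈ C.rel r)
    (h : InPTF C r τ u) : restrictTup τ (C.attrs u) ∈ C.rel u := by
  induction h with
  | base => rw [C.restrict_of_rel hτ]; exact hτ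
  | @step a b hb hc hr ih => exact hr

lemma inPTF_congr (C : Circuit X D) {r u : C.Gate} {τ τ' : X → Option D}
    (hagree : restrictTup τ (C.attrs r) = restrictTup τ' (C.attrs r))
    (h : InPTF C r τ u) : InPTF C r τ' u := by
  induction h with
  | base => exact .base
  | @step a b hb hc hr ih =>
    refine .step ih hc ?_
    have hsub : C.attrs a ⊆ C.attrs r := (C.attrs_child_subset hc).trans (C.inPTF_attrs_subset hb)
    rwa [← restrictTup_restrictTup hsub τ', ← hagree, restrictTup_restrictTup hsub]

/-- One step down in the proof tree. -/
def PTStep (C : Circuit X D) (r : C.Gate) (τ : X → Option D) (a b : C.Gate) : Prop :=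
  InPTF C r τ a ∧ b ∈ C.children a ∧ restrictTup τ (C.attrs b) ∈ C.rel b

lemma down_attrs (C : Circuit X D) {r a b : C.Gate} {τ : X → Option D}
    (h : Relation.ReflTransGen (PTStep C r τ) a b) : C.attrs b ⊆ C.attrs a := by
  induction h with
  | refl => exact Finset.Subset.refl _
  | tail h1 h2 ih => exact (C.attrs_child_subset h2.2.1).trans ih

lemma down_depth (C : Circuit X D) {r a b : C.Gate} {τ : X → Option D}
    (h : Relation.ReflTransGen (PTStep C r τ) a b) : C.depth b ≤ C.depth a := by
  induction h with
  | refl => exact le_refl _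
  | tail h1 h2 ih => exact le_trans (le_of_lt (C.depth_lt _ _ h2.2.1)) ih

lemma inPTF_down (C : Circuit X D) {r u : C.Gate} {τ : X → Option D}
    (h : InPTF C r τ u) : Relation.ReflTransGen (PTStep C r τ) r u := by
  induction h with
  | base => exact .refl
  | @step a b hb hc hr ih => exact ih.tail ⟨hb, hc, hr⟩

lemma pt_trichotomy (C : Circuit X D) (hd : C.DisjointUnions) {r v₁ v₂ : C.Gate}
    {τ : X → Option D} (h1 : InPTF C r τ v₁) (h2 : InPTF C r τ v₂) :
    Disjoint (C.attrs v₁) (C.attrs v₂) ∨ Relation.ReflTransGen (PTStep C r τ) v₁ v₂ ∨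
      Relation.ReflTransGen (PTStep C r τ) v₂ v₁ := by
  induction h1 with
  | base => exact Or.inr (Or.inl (C.inPTF_down h2))
  | @step u p hp hu hr ih =>
    rcases ih with hdis | hdown | hdown
    · exact Or.inl (Finset.disjoint_of_subset_left (C.attrs_child_subset hu) hdis)
    · rcases Relation.ReflTransGen.cases_head hdown with heq | ⟨g, hg, hdown'⟩
      · subst heq
        exact Or.inr (Or.inr (Relation.ReflTransGen.single ⟨hp, hu, hr⟩))
      · by_cases hgu : g = u
        · subst hgu; exact Or.inr (Or.inl hdown')
        · cases hlp : C.label p with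
          | inp x d =>
            rw [C.inp_no_children p x d hlp] at hu; simp at hu
          | union =>
            exfalso
            have ha1 : C.attrs g = C.attrs p := C.union_attrs p hlp g hg.2.1
            have ha2 : C.attrs u = C.attrs p := C.union_attrs p hlp u hu
            have hdisj := hd p hlp g hg.2.1 u hu hgu
            have hgr : restrictTup τ (C.attrs p) ∈ C.rel g := by rw [← ha1]; exact hg.2.2
            have hur : restrictTup τ (C.attrs p) ∈ C.rel u := by rw [← ha2]; exact hr
            exact Finset.disjoint_left.mp hdisj hgr hur
          | prod =>
            have hdisj := C.prod_attrs p hlp g hg.2.1 u hu hgu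
            exact Or.inl (hdisj.symm.mono_right (C.down_attrs hdown'))
    · exact Or.inr (Or.inr (hdown.tail ⟨hp, hu, hr⟩))

lemma pt_parent_unique (C : Circuit X D) (hd : C.DisjointUnions) {r u w₁ w₂ : C.Gate}
    {τ : X → Option D} (h1 : EdgePTF C r τ (u, w₁)) (h2 : EdgePTF C r τ (u, w₂)) :
    w₁ = w₂ := by
  obtain ⟨hp1, hc1, hr1⟩ := h1
  obtain ⟨hp2, hc2, hr2⟩ := h2
  obtain ⟨x₀, hx₀⟩ := C.attrs_nonempty u
  have key : ∀ w w' : C.Gate, InPTF C r τ w → u ∈ C.children w → u ∈ C.children w' →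
      Relation.ReflTransGen (PTStep C r τ) w w' → w = w' := by
    intro w w' hw hcw hcw' hdown
    rcases Relation.ReflTransGen.cases_head hdown with h | ⟨g, hg, hdown'⟩
    · exact h
    · exfalso
      by_cases hgu : g = u
      · rw [hgu] at hdown'
        have hle := C.down_depth hdown'
        have hlt := C.depth_lt w' u hcw'
        omega
      · cases hlp : C.label w with
        | inp x d => rw [C.inp_no_children w x d hlp] at hcw; simp at hcw
        | union =>
          have ha1 : C.attrs g = C.attrs w := C.union_attrs w hlp g hg.2.1
          have ha2 : C.attrs u = C.attrs w := C.union_attrs w hlp u hcw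
          have hdisj := hd w hlp g hg.2.1 u hcw hgu
          have hgr : restrictTup τ (C.attrs w) ∈ C.rel g := by rw [← ha1]; exact hg.2.2
          have hur : restrictTup τ (C.attrs w) ∈ C.rel u := by rw [← ha2]; exact hr1
          exact Finset.disjoint_left.mp hdisj hgr hur
        | prod =>
          have hdisj := C.prod_attrs w hlp g hg.2.1 u hcw hgu
          have hsub : C.attrs u ⊆ C.attrs g :=
            (C.attrs_child_subset hcw').trans (C.down_attrs hdown')
          exact Finset.disjoint_left.mp hdisj (hsub hx₀) hx₀
  rcases C.pt_trichotomy hd hp1 hp2 with hdis | hdown | hdown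
  · exact absurd hx₀ (fun h =>
      Finset.disjoint_left.mp hdis (C.attrs_child_subset hc1 h) (C.attrs_child_subset hc2 h))
  · exact key w₁ w₂ hp1 hc1 hc2 hdown
  · exact (key w₂ w₁ hp2 hc2 hc1 hdown).symm

/-- A gate carrying positive flow. -/
def HotG (C : Circuit X D) (W : C.Gate × C.Gate → ℝ) (v : C.Gate) : Prop :=
  (v = C.output ∧ ∃ c ∈ C.children v, 0 < W (c, v)) ∨
  (v ≠ C.output ∧ ∃ w, v ∈ C.children w ∧ 0 < W (v, w))

lemma hot_union (C : Circuit X D) (W : C.Gate × C.Gate → ℝ) (hW0 : ∀ e, 0 ≤ W e)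
    (hs : C.Sound W) {v : C.Gate} (hl : C.label v = .union) (h : HotG C W v) :
    ∃ c ∈ C.children v, 0 < W (c, v) := by
  rcases h with ⟨_, h⟩ | ⟨hne, w, hw, hpos⟩
  · exact h
  · have hsum := hs.1 v hl hne
    have hout : 0 < ∑ o ∈ C.outEdges v, W o :=
      lt_of_lt_of_le hpos (Finset.single_le_sum (fun i _ => hW0 i)
        (C.mem_outEdges'.mpr ⟨hw, rfl⟩))
    rw [← hsum] at hout
    by_contra hc
    push_neg at hc
    refine absurd (Finset.sum_nonpos fun i hi => ?_) (not_le.mpr hout)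
    obtain ⟨h1, h2⟩ := C.mem_inEdges'.mp hi
    have : i = (i.1, v) := Prod.ext rfl h2
    rw [this]
    exact hc i.1 (h2 ▸ h1)

lemma hot_prod (C : Circuit X D) (W : C.Gate × C.Gate → ℝ) (hW0 : ∀ e, 0 ≤ W e)
    (hs : C.Sound W) {v : C.Gate} (hl : C.label v = .prod) (h : HotG C W v) :
    ∀ c ∈ C.children v, 0 < W (c, v) := by
  intro c hc
  rcases h with ⟨_, c₀, hc₀, hpos⟩ | ⟨hne, w, hw, hpos⟩
  · have := (hs.2 v hl).1 (c, v) (C.mem_inEdges'.mpr ⟨hc, rfl⟩)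
      (c₀, v) (C.mem_inEdges'.mpr ⟨hc₀, rfl⟩)
    rw [this]; exact hpos
  · have heq := (hs.2 v hl).2 hne (c, v) (C.mem_inEdges'.mpr ⟨hc, rfl⟩)
    rw [heq]
    exact lt_of_lt_of_le hpos (Finset.single_le_sum (fun i _ => hW0 i)
      (C.mem_outEdges'.mpr ⟨hw, rfl⟩))

lemma exists_pos_into_output (C : Circuit X D) (W : C.Gate × C.Gate → ℝ)
    (hW0 : ∀ e, 0 ≤ W e) (hs : C.Sound W) {e₀ : C.Gate × C.Gate}
    (he₀ : e₀ ∈ C.edges) (hpos : 0 < W e₀) :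
    ∃ c ∈ C.children C.output, 0 < W (c, C.output) := by
  classical
  set s := C.edges.filter (fun e => 0 < W e) with hs_def
  have hne : s.Nonempty := ⟨e₀, Finset.mem_filter.mpr ⟨he₀, hpos⟩⟩
  obtain ⟨e, hes, hemax⟩ := Finset.exists_max_image s (fun e => C.depth e.2) hne
  rw [hs_def, Finset.mem_filter] at hes
  by_cases hout : e.2 = C.output
  · refine ⟨e.1, ?_, ?_⟩
    · rw [← hout]; exact C.mem_edges'.mp hes.1
    · have : (e.1, C.output) = e := Prod.ext rfl hout.symm
      rw [this]; exact hes.2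
  · exfalso
    have hch := C.mem_edges'.mp hes.1
    have hstep : ∃ o ∈ C.outEdges e.2, 0 < W o := by
      cases hl : C.label e.2 with
      | inp x d => rw [C.inp_no_children _ x d hl] at hch; simp at hch
      | union =>
        have h1 := hs.1 e.2 hl hout
        have h2 : 0 < ∑ i ∈ C.inEdges e.2, W i :=
          lt_of_lt_of_le hes.2 (Finset.single_le_sum (fun i _ => hW0 i)
            (C.mem_inEdges'.mpr ⟨hch, rfl⟩))
        rw [h1] at h2
        by_contra hcon
        push_neg at hcon
        exact absurd (Finset.sum_nonpos fun o ho => hcon o ho) (not_le.mpr h2)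
      | prod =>
        have h1 := (hs.2 e.2 hl).2 hout e (C.mem_inEdges'.mpr ⟨hch, rfl⟩)
        have h2 : 0 < ∑ o ∈ C.outEdges e.2, W o := h1 ▸ hes.2
        by_contra hcon
        push_neg at hcon
        exact absurd (Finset.sum_nonpos fun o ho => hcon o ho) (not_le.mpr h2)
    obtain ⟨o, ho, hWo⟩ := hstep
    obtain ⟨hoe, ho1⟩ := C.mem_outEdges'.mp ho
    have hle : C.depth o.2 ≤ C.depth e.2 :=
      hemax o (Finset.mem_filter.mpr ⟨C.mem_edges'.mpr hoe, hWo⟩)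
    have hlt : C.depth e.2 < C.depth o.2 := by
      have := C.depth_lt o.2 o.1 hoe; rwa [ho1] at this
    omega

lemma exists_good_tuple (C : Circuit X D) (hd : C.DisjointUnions)
    (W : C.Gate × C.Gate → ℝ) (hW0 : ∀ e, 0 ≤ W e) (hs : C.Sound W) :
    ∀ n (v : C.Gate), C.depth v = n → C.depth v ≤ C.depth C.output → HotG C W v →
      ∃ σ, σ ∈ C.rel v ∧ ∀ e, EdgePTF C v σ e → 0 < W e := by
  intro n
  induction n using Nat.strong_induction_on with
  | _ n ih =>
    intro v hn hvd hhot
    cases hl : C.label v with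
    | inp x d =>
      refine ⟨fun y => if y = x then some d else none,
        (C.rel_inp v x d hl _).mpr rfl, ?_⟩
      intro e he
      exfalso
      obtain ⟨h2, h1, hr⟩ := he
      have hroot : ∀ u, InPTF C v (fun y => if y = x then some d else none) u → u = v := by
        intro u h
        induction h with
        | base => rfl
        | @step a b hb hc _ ihh =>
          rw [ihh] at hc
          rw [C.inp_no_children v x d hl] at hc
          simp at hc
      have := hroot e.2 h2
      rw [this, C.inp_no_children v x d hl] at h1
      simp at h1
    | union =>
      obtain ⟨c, hc, hpos⟩ := C.hot_union W hW0 hs hl hhot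
      have hcd : C.depth c < C.depth v := C.depth_lt v c hc
      have hcout : c ≠ C.output := by
        intro h
        rw [h] at hcd
        omega
      obtain ⟨σc, hσc, hpt⟩ := ih (C.depth c) (hn ▸ hcd) c rfl
        (le_of_lt (lt_of_lt_of_le hcd hvd)) (Or.inr ⟨hcout, v, hc, hpos⟩)
      have hrestr : restrictTup σc (C.attrs c) = σc := C.restrict_of_rel hσc
      have hattr : C.attrs c = C.attrs v := C.union_attrs v hl c hc
      have huniq : ∀ u ∈ C.children v, restrictTup σc (C.attrs u) ∈ C.rel u → u = c := by
        intro u hu hur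
        by_contra hne
        have hdisj := hd v hl u hu c hc hne
        have h1 : σc ∈ C.rel u := by
          rwa [C.union_attrs v hl u hu, ← hattr, hrestr] at hur
        exact Finset.disjoint_left.mp hdisj h1 hσc
      have htrans : ∀ u, InPTF C v σc u → u = v ∨ InPTF C c σc u := by
        intro u h
        induction h with
        | base => exact Or.inl rfl
        | @step a b hb hc' hr ihh =>
          rcases ihh with heq | hh
          · rw [heq] at hc'
            have : a = c := huniq a hc' hr
            rw [this]
            exact Or.inr .base
          · exact Or.inr (.step hh hc' hr)
      refine ⟨σc, (C.rel_union v hl σc).mpr ⟨c, hc, hσc⟩, ?_⟩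
      intro e he
      obtain ⟨h2, h1, hr⟩ := he
      rcases htrans e.2 h2 with h | h
      · have he1 : e.1 = c := huniq e.1 (h ▸ h1) hr
        have : e = (c, v) := Prod.ext he1 h
        rw [this]; exact hpos
      · exact hpt e ⟨h, h1, hr⟩
    | prod =>
      have hall : ∀ c ∈ C.children v, 0 < W (c, v) := C.hot_prod W hW0 hs hl hhot
      have hcne : ∀ c ∈ C.children v, c ≠ C.output := by
        intro c hc h
        have := C.depth_lt v c hc
        rw [h] at this
        omega
      have hF : ∀ c, ∃ σ, c ∈ C.children v →
          σ ∈ C.rel c ∧ ∀ e, EdgePTF C c σ e → 0 < W e := by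
        intro c
        by_cases hc : c ∈ C.children v
        · obtain ⟨σ, hσ1, hσ2⟩ := ih (C.depth c) (hn ▸ C.depth_lt v c hc) c rfl
            (le_of_lt (lt_of_lt_of_le (C.depth_lt v c hc) hvd))
            (Or.inr ⟨hcne c hc, v, hc, hall c hc⟩)
          exact ⟨σ, fun _ => ⟨hσ1, hσ2⟩⟩
        · exact ⟨fun _ => none, fun h => absurd h hc⟩
      choose F hF using hF
      have hattrsv := C.attrs_internal v (Or.inr hl)
      have huniq : ∀ x, x ∈ C.attrs v → ∃! c, c ∈ C.children v ∧ x ∈ C.attrs c := by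
        intro x hx
        rw [hattrsv] at hx
        obtain ⟨c, hc, hxc⟩ := Finset.mem_biUnion.mp hx
        refine ⟨c, ⟨hc, hxc⟩, ?_⟩
        rintro c' ⟨hc', hxc'⟩
        by_contra hne
        exact Finset.disjoint_left.mp (C.prod_attrs v hl c' hc' c hc hne) hxc' hxc
      classical
      set σ : X → Option D := fun x =>
        if hx : x ∈ C.attrs v then
          F ((C.children v).choose (fun c => x ∈ C.attrs c) (huniq x hx)) x
        else none with hσdef
      have hchoose : ∀ c, c ∈ C.children v → ∀ x, x ∈ C.attrs c → σ x = F c x := by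
        intro c hc x hx
        have hxv : x ∈ C.attrs v := C.attrs_child_subset hc hx
        have h1 := Finset.choose_mem (fun c => x ∈ C.attrs c) (C.children v) (huniq x hxv)
        have h2 := Finset.choose_property (fun c => x ∈ C.attrs c) (C.children v) (huniq x hxv)
        have hcc : (C.children v).choose (fun c => x ∈ C.attrs c) (huniq x hxv) = c :=
          (huniq x hxv).unique ⟨h1, h2⟩ ⟨hc, hx⟩
        simp only [hσdef, dif_pos hxv, hcc]
      have hkey : ∀ c ∈ C.children v, restrictTup σ (C.attrs c) = F c := by
        intro c hc
        funext x
        by_cases hx : x ∈ C.attrs c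
        · simp only [restrictTup, if_pos hx]
          exact hchoose c hc x hx
        · simp only [restrictTup, if_neg hx]
          symm
          rw [← Option.not_isSome_iff_eq_none]
          simp [C.rel_support c (F c) ((hF c hc).1) x, hx]
      have hσrel : σ ∈ C.rel v := by
        rw [C.rel_prod v hl]
        constructor
        · intro x
          by_cases hx : x ∈ C.attrs v
          · simp only [hσdef, dif_pos hx]
            have h1 := Finset.choose_mem (fun c => x ∈ C.attrs c) (C.children v) (huniq x hx)
            have h2 := Finset.choose_property (fun c => x ∈ C.attrs c) (C.children v) (huniq x hx)
            have := C.rel_support _ (F _) ((hF _ h1).1) x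
            simp [this, h2, hx]
          · simp [hσdef, dif_neg hx, hx]
        · intro c hc
          rw [hkey c hc]
          exact (hF c hc).1
      have htrans : ∀ u, InPTF C v σ u → u = v ∨ ∃ c ∈ C.children v, InPTF C c σ u := by
        intro u h
        induction h with
        | base => exact Or.inl rfl
        | @step a b hb hc' hr ihh =>
          rcases ihh with heq | ⟨c, hc, hcc⟩
          · rw [heq] at hc'
            exact Or.inr ⟨a, hc', .base⟩
          · exact Or.inr ⟨c, hc, .step hcc hc' hr⟩
      refine ⟨σ, hσrel, ?_⟩
      intro e he
      obtain ⟨h2, h1, hr⟩ := he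
      rcases htrans e.2 h2 with h | ⟨c, hc, hcc⟩
      · have : e = (e.1, v) := Prod.ext rfl h
        rw [this]
        exact hall e.1 (h ▸ h1)
      · have hcongr : restrictTup σ (C.attrs c) = restrictTup (F c) (C.attrs c) := by
          rw [hkey c hc, C.restrict_of_rel (hF c hc).1]
        have h2' : InPTF C c (F c) e.2 := C.inPTF_congr hcongr hcc
        have hsub : C.attrs e.1 ⊆ C.attrs c :=
          (C.attrs_child_subset h1).trans (C.inPTF_attrs_subset hcc)
        have hr' : restrictTup (F c) (C.attrs e.1) ∈ C.rel e.1 := by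
          rw [← restrictTup_restrictTup hsub (F c), ← hcongr,
            restrictTup_restrictTup hsub]
          exact hr
        exact (hF c hc).2 e ⟨h2', h1, hr'⟩

lemma pt_notin_in (C : Circuit X D) {τ : X → Option D} {u : C.Gate} (hni : ¬ C.InPT τ u) :
    ∀ e ∈ C.inEdges u, ¬ C.EdgeInPT τ e := by
  intro e he hE
  obtain ⟨h1, h2⟩ := C.mem_inEdges'.mp he
  exact hni (h2 ▸ hE.1)

lemma pt_notin_out (C : Circuit X D) {τ : X → Option D} {u : C.Gate} (hni : ¬ C.InPT τ u) :
    ∀ e ∈ C.outEdges u, ¬ C.EdgeInPT τ e := by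
  intro e he hE
  obtain ⟨h1, h2⟩ := C.mem_outEdges'.mp he
  exact hni (h2 ▸ InPT.step hE.1 hE.2.1 hE.2.2)

lemma pt_in_union (C : Circuit X D) (hd : C.DisjointUnions) {τ : X → Option D} {u : C.Gate}
    (hτ : τ ∈ C.rel C.output) (hu : C.InPT τ u) (hl : C.label u = .union) :
    ∃ c₀ ∈ C.children u, C.EdgeInPT τ (c₀, u) ∧
      ∀ e ∈ C.inEdges u, C.EdgeInPT τ e → e = (c₀, u) := by
  have hσu : restrictTup τ (C.attrs u) ∈ C.rel u := C.inPTF_rel hτ ((C.inPT_iff τ u).mp hu)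
  obtain ⟨c₀, hc₀, hrc₀⟩ := (C.rel_union u hl _).mp hσu
  have hE : C.EdgeInPT τ (c₀, u) := by
    refine ⟨hu, hc₀, ?_⟩
    rw [C.union_attrs u hl c₀ hc₀]
    exact hrc₀
  refine ⟨c₀, hc₀, hE, ?_⟩
  intro e he hEe
  obtain ⟨h1, h2⟩ := C.mem_inEdges'.mp he
  have hc1 : e.1 ∈ C.children u := h2 ▸ h1
  have hre : restrictTup τ (C.attrs u) ∈ C.rel e.1 := by
    rw [← C.union_attrs u hl e.1 hc1]
    exact hEe.2.2
  have : e.1 = c₀ := by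
    by_contra hne
    exact Finset.disjoint_left.mp (hd u hl e.1 hc1 c₀ hc₀ hne) hre hrc₀
  exact Prod.ext this h2

lemma pt_in_prod (C : Circuit X D) {τ : X → Option D} {u : C.Gate}
    (hτ : τ ∈ C.rel C.output) (hu : C.InPT τ u) (hl : C.label u = .prod) :
    ∀ e ∈ C.inEdges u, C.EdgeInPT τ e := by
  intro e he
  obtain ⟨h1, h2⟩ := C.mem_inEdges'.mp he
  have hσu : restrictTup τ (C.attrs u) ∈ C.rel u := C.inPTF_rel hτ ((C.inPT_iff τ u).mp hu)
  have hc1 : e.1 ∈ C.children u := h2 ▸ h1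
  have hre := ((C.rel_prod u hl _).mp hσu).2 e.1 hc1
  rw [restrictTup_restrictTup (C.attrs_child_subset hc1)] at hre
  exact ⟨h2 ▸ hu, h1, hre⟩

lemma pt_out_unique (C : Circuit X D) (hd : C.DisjointUnions) {τ : X → Option D} {u : C.Gate}
    (hu : C.InPT τ u) (hne : u ≠ C.output) :
    ∃ w₀, u ∈ C.children w₀ ∧ C.EdgeInPT τ (u, w₀) ∧
      ∀ e ∈ C.outEdges u, C.EdgeInPT τ e → e = (u, w₀) := by
  obtain ⟨w₀, hw₀, hE⟩ : ∃ w₀, u ∈ C.children w₀ ∧ C.EdgeInPT τ (u, w₀) := by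
    cases hu with
    | out => exact absurd rfl hne
    | step hb hcb hrb => exact ⟨_, hcb, hb, hcb, hrb⟩
  refine ⟨w₀, hw₀, hE, ?_⟩
  intro e he hEe
  obtain ⟨h1, h2⟩ := C.mem_outEdges'.mp he
  have he' : e = (u, e.2) := Prod.ext h2 rfl
  rw [he'] at hEe
  have heq := C.pt_parent_unique hd (C.edgeInPT_iff.mp hEe) (C.edgeInPT_iff.mp hE)
  rw [he', heq]

end Circuit


/-- For every sound nonnegative edge-weighting `W` of a d-circuit, there exists a
tuple-weighting `ω` of `R(C)` inducing `W`, i.e. `W(e) = Σ_{τ ∈ R(e)} ω(τ)` for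
every edge `e`. -/
theorem sound_edge_weighting_is_induced {X D : Type} [Fintype X] [Fintype D]
    [DecidableEq X] [DecidableEq D]
    (C : Circuit X D) (hd : C.DisjointUnions)
    (W : C.Gate × C.Gate → ℝ) (hW0 : ∀ e, 0 ≤ W e) (hsound : C.Sound W) :
    ∃ ω : (X → Option D) → ℝ,
      (∀ τ ∈ C.rel C.output, 0 ≤ ω τ) ∧
      ∀ e ∈ C.edges, W e = ∑ τ ∈ C.relEdge e, ω τ := by
  classical
  suffices h : ∀ N (W : C.Gate × C.Gate → ℝ),
      (C.edges.filter (fun e => W e ≠ 0)).card = N →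
      (∀ e, 0 ≤ W e) → C.Sound W →
      ∃ ω : (X → Option D) → ℝ, (∀ τ ∈ C.rel C.output, 0 ≤ ω τ) ∧
        ∀ e ∈ C.edges, W e = ∑ τ ∈ C.relEdge e, ω τ by
    exact h _ W rfl hW0 hsound
  intro N
  induction N using Nat.strong_induction_on with
  | _ N ih =>
    intro W hcard hW0 hsound
    by_cases hz : ∀ e ∈ C.edges, W e = 0
    · refine ⟨fun _ => 0, fun τ _ => le_refl 0, fun e he => by simp [hz e he]⟩
    · push_neg at hz
      obtain ⟨e₀, he₀, hne₀⟩ := hz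
      have hpos₀ : 0 < W e₀ := lt_of_le_of_ne (hW0 e₀) (Ne.symm hne₀)
      obtain ⟨c₀, hc₀, hWc₀⟩ := C.exists_pos_into_output W hW0 hsound he₀ hpos₀
      obtain ⟨τs, hτrel, hτpos'⟩ := C.exists_good_tuple hd W hW0 hsound
        (C.depth C.output) C.output rfl (le_refl _) (Or.inl ⟨rfl, c₀, hc₀, hWc₀⟩)
      have hτpos : ∀ e, C.EdgeInPT τs e → 0 < W e := fun e hE =>
        hτpos' e (C.edgeInPT_iff.mp hE)
      have hPTne : (C.edges.filter (fun e => C.EdgeInPT τs e)).Nonempty := by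
        cases hl : C.label C.output with
        | inp x d => rw [C.inp_no_children _ x d hl] at hc₀; simp at hc₀
        | union =>
          have hrs : restrictTup τs (C.attrs C.output) = τs := C.restrict_of_rel hτrel
          obtain ⟨c, hc, hrc⟩ := (C.rel_union _ hl τs).mp hτrel
          refine ⟨(c, C.output), Finset.mem_filter.mpr ⟨C.mem_edges'.mpr hc, .out, hc, ?_⟩⟩
          rw [C.union_attrs _ hl c hc, hrs]
          exact hrc
        | prod =>
          have h := ((C.rel_prod _ hl τs).mp hτrel).2 c₀ hc₀
          exact ⟨(c₀, C.output), Finset.mem_filter.mpr ⟨C.mem_edges'.mpr hc₀, .out, hc₀, h⟩⟩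
      set δ : ℝ := (C.edges.filter (fun e => C.EdgeInPT τs e)).inf' hPTne W with hδdef
      have hδpos : 0 < δ := by
        rw [hδdef, Finset.lt_inf'_iff]
        intro e hee
        exact hτpos e (Finset.mem_filter.mp hee).2
      have hδle : ∀ e, C.EdgeInPT τs e → δ ≤ W e := by
        intro e hE
        exact Finset.inf'_le W (Finset.mem_filter.mpr ⟨C.mem_edges'.mpr hE.2.1, hE⟩)
      set W' : C.Gate × C.Gate → ℝ := fun e => if C.EdgeInPT τs e then W e - δ else W e
        with hW'def
      have hW0' : ∀ e, 0 ≤ W' e := by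
        intro e
        by_cases hE : C.EdgeInPT τs e
        · simp only [hW'def, if_pos hE]; linarith [hδle e hE]
        · simp only [hW'def, if_neg hE]; exact hW0 e
      have hsum' : ∀ s : Finset (C.Gate × C.Gate),
          ∑ e ∈ s, W' e =
            (∑ e ∈ s, W e) - δ * ((s.filter (fun e => C.EdgeInPT τs e)).card : ℝ) := by
        intro s
        have hpt : ∀ e, W' e = W e - (if C.EdgeInPT τs e then δ else 0) := by
          intro e
          by_cases hE : C.EdgeInPT τs e <;> simp [hW'def, hE]
        simp only [hpt]
        rw [Finset.sum_sub_distrib, ← Finset.sum_filter, Finset.sum_const,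
          nsmul_eq_mul, mul_comm]
      have hfin0 : ∀ u : C.Gate, ¬ C.InPT τs u →
          (C.inEdges u).filter (fun e => C.EdgeInPT τs e) = ∅ :=
        fun u hni => Finset.filter_eq_empty_iff.mpr (C.pt_notin_in hni)
      have hfout0 : ∀ u : C.Gate, ¬ C.InPT τs u →
          (C.outEdges u).filter (fun e => C.EdgeInPT τs e) = ∅ :=
        fun u hni => Finset.filter_eq_empty_iff.mpr (C.pt_notin_out hni)
      have hfin1 : ∀ u : C.Gate, C.InPT τs u → C.label u = .union →
          ((C.inEdges u).filter (fun e => C.EdgeInPT τs e)).card = 1 := by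
        intro u hu hl
        obtain ⟨c₁, hc₁, hE, huq⟩ := C.pt_in_union hd hτrel hu hl
        have heq : (C.inEdges u).filter (fun e => C.EdgeInPT τs e) = {(c₁, u)} := by
          apply Finset.eq_singleton_iff_unique_mem.mpr
          refine ⟨Finset.mem_filter.mpr ⟨C.mem_inEdges'.mpr ⟨hc₁, rfl⟩, hE⟩, ?_⟩
          intro e hee
          obtain ⟨hm, hEe⟩ := Finset.mem_filter.mp hee
          exact huq e hm hEe
        rw [heq, Finset.card_singleton]
      have hfout1 : ∀ u : C.Gate, C.InPT τs u → u ≠ C.output →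
          ((C.outEdges u).filter (fun e => C.EdgeInPT τs e)).card = 1 := by
        intro u hu hne
        obtain ⟨w₀, hw₀, hE, huq⟩ := C.pt_out_unique hd hu hne
        have heq : (C.outEdges u).filter (fun e => C.EdgeInPT τs e) = {(u, w₀)} := by
          apply Finset.eq_singleton_iff_unique_mem.mpr
          refine ⟨Finset.mem_filter.mpr ⟨C.mem_outEdges'.mpr ⟨hw₀, rfl⟩, hE⟩, ?_⟩
          intro e hee
          obtain ⟨hm, hEe⟩ := Finset.mem_filter.mp hee
          exact huq e hm hEe
        rw [heq, Finset.card_singleton]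
      have hWs' : C.Sound W' := by
        constructor
        · intro u hl hne
          rw [hsum' (C.inEdges u), hsum' (C.outEdges u), hsound.1 u hl hne]
          by_cases hu : C.InPT τs u
          · rw [hfin1 u hu hl, hfout1 u hu hne]
          · rw [hfin0 u hu, hfout0 u hu]
        · intro u hl
          constructor
          · intro i hi i' hi'
            by_cases hu : C.InPT τs u
            · have h1 := C.pt_in_prod hτrel hu hl i hi
              have h2 := C.pt_in_prod hτrel hu hl i' hi'
              simp only [hW'def, if_pos h1, if_pos h2]
              rw [(hsound.2 u hl).1 i hi i' hi']
            · simp only [hW'def, if_neg (C.pt_notin_in hu i hi),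
                if_neg (C.pt_notin_in hu i' hi')]
              exact (hsound.2 u hl).1 i hi i' hi'
          · intro hne i hi
            rw [hsum' (C.outEdges u)]
            by_cases hu : C.InPT τs u
            · have h1 := C.pt_in_prod hτrel hu hl i hi
              simp only [hW'def, if_pos h1]
              rw [hfout1 u hu hne, (hsound.2 u hl).2 hne i hi]
              push_cast
              ring
            · simp only [hW'def, if_neg (C.pt_notin_in hu i hi)]
              rw [hfout0 u hu, (hsound.2 u hl).2 hne i hi]
              simp
      obtain ⟨e₁, he₁, hmin⟩ := Finset.exists_mem_eq_inf' hPTne W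
      obtain ⟨he₁e, he₁E⟩ := Finset.mem_filter.mp he₁
      have hsub : C.edges.filter (fun e => W' e ≠ 0) ⊆ C.edges.filter (fun e => W e ≠ 0) := by
        intro e he
        obtain ⟨h1, h2⟩ := Finset.mem_filter.mp he
        refine Finset.mem_filter.mpr ⟨h1, ?_⟩
        by_cases hE : C.EdgeInPT τs e
        · exact ne_of_gt (lt_of_lt_of_le hδpos (hδle e hE))
        · simpa [hW'def, hE] using h2
      have hmem1 : e₁ ∈ C.edges.filter (fun e => W e ≠ 0) :=
        Finset.mem_filter.mpr ⟨he₁e, ne_of_gt (hτpos e₁ he₁E)⟩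
      have hnot1 : e₁ ∉ C.edges.filter (fun e => W' e ≠ 0) := by
        simp only [Finset.mem_filter, not_and, not_not]
        intro _
        simp only [hW'def, if_pos he₁E]
        rw [hδdef, hmin]
        ring
      have hlt : (C.edges.filter (fun e => W' e ≠ 0)).card < N := by
        rw [← hcard]
        exact Finset.card_lt_card ((Finset.ssubset_iff_of_subset hsub).mpr ⟨e₁, hmem1, hnot1⟩)
      obtain ⟨ω', hω'0, hω'⟩ := ih _ hlt W' rfl hW0' hWs'
      refine ⟨fun τ => ω' τ + if τ = τs then δ else 0, ?_, ?_⟩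
      · intro τ hτ
        by_cases h : τ = τs
        · simp only [if_pos h]
          have := hω'0 τ hτ
          linarith
        · simp only [if_neg h, add_zero]
          exact hω'0 τ hτ
      · intro e he
        rw [Finset.sum_add_distrib, ← hω' e he,
          Finset.sum_ite_eq' (C.relEdge e) τs (fun _ => δ)]
        have hmem : τs ∈ C.relEdge e ↔ C.EdgeInPT τs e := by
          unfold Circuit.relEdge
          rw [Finset.mem_filter]
          simp [hτrel]
        by_cases hE : C.EdgeInPT τs e
        · rw [if_pos (hmem.mpr hE)]
          simp only [hW'def, if_pos hE]
          ring
        · rw [if_neg (fun h => hE (hmem.mp h))]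
          simp [hW'def, hE]
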